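/- Let G(∘), G(∗) be groups on a finite set G of size n with K = {a : dist_a < n/3}. If (a,b) ∈ diff(∘,∗) with a ∈ K and b ∈ K, then a∘b ∉ K and a∗b ∉ K. -/
import Mathlib


/-- The multiplication of a group structure `S` on the set `G`. -/
def mulOf {G : Type*} (S : Group G) : G → G → G := fun a b => letI := S; a * b

/-- `dist_a(∘,∗)`: the number of `b` with `a∘b ≠ a∗b`. -/
def rowDist {G : Type*} [Fintype G] [DecidableEq G] (S T : Group G) (a : G) : ℕ :=
  (Finset.univ.filter fun b => mulOf S a b ≠ mulOf T a b).card

/-- `dist(∘,∗)`: the number of pairs `(a,b)` with `a∘b ≠ a∗b`. -/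
def tableDist {G : Type*} [Fintype G] [DecidableEq G] (S T : Group G) : ℕ :=
  (Finset.univ.filter fun p : G × G => mulOf S p.1 p.2 ≠ mulOf T p.1 p.2).card

lemma mulOf_assoc {G : Type*} (S : Group G) (x y z : G) :
    mulOf S (mulOf S x y) z = mulOf S x (mulOf S y z) := by
  letI := S; exact mul_assoc x y z

lemma mulOf_right_cancel {G : Type*} (S : Group G) {x z y : G}
    (h : mulOf S x y = mulOf S z y) : x = z := by
  letI := S; exact mul_right_cancel h

lemma card_filter_comp {G : Type*} [Fintype G] [DecidableEq G] (S : Group G) (b : G)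
    (p : G → Prop) [DecidablePred p] :
    (Finset.univ.filter fun y => p (mulOf S b y)).card = (Finset.univ.filter p).card := by
  letI := S
  apply Finset.card_bij' (fun y _ => mulOf S b y) (fun z _ => mulOf S b⁻¹ z)
  · intro y hy
    simp only [Finset.mem_filter, Finset.mem_univ, true_and] at hy ⊢
    exact hy
  · intro z hz
    simp only [Finset.mem_filter, Finset.mem_univ, true_and] at hz ⊢
    show p (b * (b⁻¹ * z))
    simpa [← mul_assoc] using hz
  · intro y _; show b⁻¹ * (b * y) = y; simp [← mul_assoc]
  · intro z _; show b * (b⁻¹ * z) = z; simp [← mul_assoc]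

lemma three_row {G : Type*} [Fintype G] [DecidableEq G] (S T : Group G) (a b c : G)
    (hc : ∀ y, mulOf S b y = mulOf T b y →
      mulOf S a (mulOf S b y) = mulOf T a (mulOf S b y) →
      mulOf S c y = mulOf T c y → False) :
    Fintype.card G ≤ rowDist S T a + rowDist S T b + rowDist S T c := by
  classical
  set A := Finset.univ.filter fun y => mulOf S a (mulOf S b y) ≠ mulOf T a (mulOf S b y) with hA
  set B := Finset.univ.filter fun y => mulOf S b y ≠ mulOf T b y with hB
  set C := Finset.univ.filter fun y => mulOf S c y ≠ mulOf T c y with hC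
  have hsub : (Finset.univ : Finset G) ⊆ A ∪ B ∪ C := by
    intro y _
    by_contra h
    simp only [Finset.mem_union, hA, hB, hC, Finset.mem_filter, Finset.mem_univ, true_and,
      not_or, not_not] at h
    exact hc y h.1.2 h.1.1 h.2
  have hcard : Fintype.card G ≤ A.card + B.card + C.card := by
    calc Fintype.card G = (Finset.univ : Finset G).card := (Finset.card_univ).symm
    _ ≤ (A ∪ B ∪ C).card := Finset.card_le_card hsub
    _ ≤ (A ∪ B).card + C.card := Finset.card_union_le _ _
    _ ≤ A.card + B.card + C.card := by
        have := Finset.card_union_le A B; omega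
  have hAcard : A.card = rowDist S T a := by
    rw [hA, rowDist]
    exact card_filter_comp S b (fun z => mulOf S a z ≠ mulOf T a z)
  have hBcard : B.card = rowDist S T b := rfl
  have hCcard : C.card = rowDist S T c := rfl
  omega

theorem S_products_outside_K {G : Type*} [Fintype G] [DecidableEq G] (S T : Group G)
    (a b : G) (hdiff : mulOf S a b ≠ mulOf T a b)
    (ha : 3 * rowDist S T a < Fintype.card G)
    (hb : 3 * rowDist S T b < Fintype.card G) :
    ¬ 3 * rowDist S T (mulOf S a b) < Fintype.card G ∧
    ¬ 3 * rowDist S T (mulOf T a b) < Fintype.card G := by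
  have h1 : Fintype.card G ≤ rowDist S T a + rowDist S T b + rowDist S T (mulOf S a b) := by
    apply three_row S T a b
    intro y h1 h2 h3
    apply hdiff
    apply mulOf_right_cancel T (y := y)
    calc mulOf T (mulOf S a b) y = mulOf S (mulOf S a b) y := h3.symm
    _ = mulOf S a (mulOf S b y) := mulOf_assoc S a b y
    _ = mulOf T a (mulOf S b y) := h2
    _ = mulOf T a (mulOf T b y) := by rw [h1]
    _ = mulOf T (mulOf T a b) y := (mulOf_assoc T a b y).symm
  have h2 : Fintype.card G ≤ rowDist S T a + rowDist S T b + rowDist S T (mulOf T a b) := by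
    apply three_row S T a b
    intro y h1 h2 h3
    apply hdiff
    apply mulOf_right_cancel S (y := y)
    calc mulOf S (mulOf S a b) y = mulOf S a (mulOf S b y) := mulOf_assoc S a b y
    _ = mulOf T a (mulOf S b y) := h2
    _ = mulOf T a (mulOf T b y) := by rw [h1]
    _ = mulOf T (mulOf T a b) y := (mulOf_assoc T a b y).symm
    _ = mulOf S (mulOf T a b) y := h3.symm
  exact ⟨by omega, by omega⟩
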